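/- Let $B = \bigoplus_{n \in \mathbb{Z}} B_n$ be a commutative $\mathbb{Z}$-graded ring which is a gr-field (every nonzero homogeneous element is a unit) and suppose $B_n \neq 0$ for some $n \neq 0$. Then there exists an integer $\ell > 0$ and a homogeneous unit $Y \in B_\ell$ such that $B = B_0[Y, Y^{-1}]$, i.e., $B$ is a Laurent polynomial-type extension of the field $B_0$. -/

import Mathlib

open DirectSum

lemma inv_mem_neg_of_unit_mem {B : Type*} [CommRing B] (𝒜 : ℤ → AddSubgroup B)
    [GradedRing 𝒜] (u : Bˣ) (n : ℤ) (hu : (u : B) ∈ 𝒜 n) :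
    ((u⁻¹ : Bˣ) : B) ∈ 𝒜 (-n) := by
  have key : (u : B) * (decompose 𝒜 ((u⁻¹ : Bˣ) : B) (-n) : B) = 1 := by
    have := coe_decompose_mul_add_of_left_mem 𝒜 (b := ((u⁻¹ : Bˣ) : B)) (j := -n) hu
    rw [Units.mul_inv, add_neg_cancel] at this
    rw [← this, decompose_one]
    simp [DirectSum.one_def, DirectSum.coe_of_apply]
  have : ((u⁻¹ : Bˣ) : B) = (decompose 𝒜 ((u⁻¹ : Bˣ) : B) (-n) : B) := by
    calc ((u⁻¹ : Bˣ) : B) = ((u⁻¹ : Bˣ) : B) * ((u : B) * (decompose 𝒜 ((u⁻¹ : Bˣ) : B) (-n) : B)) := by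
            rw [key, mul_one]
      _ = (((u⁻¹ : Bˣ) : B) * (u : B)) * (decompose 𝒜 ((u⁻¹ : Bˣ) : B) (-n) : B) := by ring
      _ = (decompose 𝒜 ((u⁻¹ : Bˣ) : B) (-n) : B) := by rw [Units.inv_mul, one_mul]
  rw [this]
  exact SetLike.coe_mem _

theorem grField_is_laurent_over_degree_zero
    (B : Type*) [CommRing B] (𝒜 : ℤ → AddSubgroup B) [GradedRing 𝒜]
    -- gr-field: every nonzero homogeneous element is a unit
    (hgr : ∀ (n : ℤ) (x : B), x ∈ 𝒜 n → x ≠ 0 → IsUnit x)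
    -- some nonzero component in nonzero degree
    (hne : ∃ n : ℤ, n ≠ 0 ∧ 𝒜 n ≠ ⊥) :
    ∃ ℓ : ℤ, 0 < ℓ ∧ ∃ Y : Bˣ, (Y : B) ∈ 𝒜 ℓ ∧
      Subring.closure ((𝒜 0 : Set B) ∪ {(Y : B), ((Y⁻¹ : Bˣ) : B)}) = ⊤ := by
  obtain ⟨n₀, hn₀, hA⟩ := hne
  obtain ⟨x₀, hx₀mem, hx₀ne⟩ : ∃ x ∈ 𝒜 n₀, x ≠ 0 := by
    by_contra h
    push_neg at h
    refine hA ?_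
    ext x
    simp only [AddSubgroup.mem_bot]
    exact ⟨h x, fun h' => h' ▸ (𝒜 n₀).zero_mem⟩
  have : Nontrivial B := ⟨x₀, 0, hx₀ne⟩
  -- the support subgroup
  let S : AddSubgroup ℤ :=
    { carrier := {n : ℤ | ∃ x ∈ 𝒜 n, x ≠ 0}
      zero_mem' := ⟨1, SetLike.one_mem_graded 𝒜, one_ne_zero⟩
      add_mem' := by
        rintro a b ⟨x, hx, hxne⟩ ⟨y, hy, hyne⟩
        refine ⟨x * y, SetLike.mul_mem_graded hx hy, ?_⟩
        exact ((hgr a x hx hxne).mul (hgr b y hy hyne)).ne_zero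
      neg_mem' := by
        rintro a ⟨x, hx, hxne⟩
        obtain ⟨u, rfl⟩ := hgr a x hx hxne
        exact ⟨((u⁻¹ : Bˣ) : B), inv_mem_neg_of_unit_mem 𝒜 u a hx, u⁻¹.ne_zero⟩ }
  obtain ⟨a, hSa⟩ := Int.subgroup_cyclic S
  have hmemS : ∀ m : ℤ, m ∈ S ↔ ∃ k : ℤ, m = k * a := by
    intro m
    rw [hSa, AddSubgroup.mem_closure_singleton]
    constructor
    · rintro ⟨k, rfl⟩; exact ⟨k, (zsmul_eq_mul a k).symm⟩
    · rintro ⟨k, rfl⟩; exact ⟨k, (zsmul_eq_mul a k)⟩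
  have ha0 : a ≠ 0 := by
    rintro rfl
    obtain ⟨k, hk⟩ := (hmemS n₀).1 ⟨x₀, hx₀mem, hx₀ne⟩
    simp at hk
    exact hn₀ hk
  set ℓ : ℤ := |a| with hℓ
  have hℓpos : 0 < ℓ := abs_pos.2 ha0
  have hℓS : ℓ ∈ S := by
    rcases abs_choice a with h | h
    · rw [hℓ, h]; exact (hmemS a).2 ⟨1, (one_mul a).symm⟩
    · rw [hℓ, h]; exact (hmemS (-a)).2 ⟨-1, by ring⟩
  have hmemS' : ∀ m : ℤ, m ∈ S ↔ ∃ k : ℤ, m = k * ℓ := by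
    intro m
    rw [hmemS]
    constructor
    · rintro ⟨k, rfl⟩
      rcases abs_choice a with h | h
      · exact ⟨k, by rw [hℓ, h]⟩
      · exact ⟨-k, by rw [hℓ, h]; ring⟩
    · rintro ⟨k, rfl⟩
      rcases abs_choice a with h | h
      · exact ⟨k, by rw [hℓ, h]⟩
      · exact ⟨-k, by rw [hℓ, h]; ring⟩
  obtain ⟨y, hymem, hyne⟩ := hℓS
  obtain ⟨Y, rfl⟩ := hgr ℓ y hymem hyne
  refine ⟨ℓ, hℓpos, Y, hymem, ?_⟩
  have hYinv : ((Y⁻¹ : Bˣ) : B) ∈ 𝒜 (-ℓ) := inv_mem_neg_of_unit_mem 𝒜 Y ℓ hymem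
  set C := Subring.closure ((𝒜 0 : Set B) ∪ {(Y : B), ((Y⁻¹ : Bˣ) : B)}) with hC
  have hYC : (Y : B) ∈ C := Subring.subset_closure (Or.inr (by simp))
  have hYinvC : ((Y⁻¹ : Bˣ) : B) ∈ C := Subring.subset_closure (Or.inr (by simp))
  have hzpow_mem : ∀ k : ℤ, ((Y ^ k : Bˣ) : B) ∈ 𝒜 (k * ℓ) := by
    intro k
    induction k using Int.rec with
    | ofNat m =>
      rw [Int.ofNat_eq_coe, zpow_natCast, Units.val_pow_eq_pow_val]
      convert SetLike.pow_mem_graded m hymem using 2 <;> (push_cast; ring)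
    | negSucc m =>
      rw [zpow_negSucc, ← inv_pow, Units.val_pow_eq_pow_val]
      convert SetLike.pow_mem_graded (m + 1) hYinv using 2
      rw [Int.negSucc_eq]; push_cast; ring
  have hzpow_C : ∀ k : ℤ, ((Y ^ k : Bˣ) : B) ∈ C := by
    intro k
    induction k using Int.rec with
    | ofNat m =>
      rw [Int.ofNat_eq_coe, zpow_natCast, Units.val_pow_eq_pow_val]
      exact pow_mem hYC m
    | negSucc m =>
      rw [zpow_negSucc, ← inv_pow, Units.val_pow_eq_pow_val]
      exact pow_mem hYinvC (m + 1)
  have hhom : ∀ (n : ℤ) (x : B), x ∈ 𝒜 n → x ∈ C := by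
    intro n x hx
    rcases eq_or_ne x 0 with rfl | hxne
    · exact zero_mem C
    obtain ⟨k, rfl⟩ := (hmemS' n).1 ⟨x, hx, hxne⟩
    have hz : x * ((Y ^ (-k) : Bˣ) : B) ∈ 𝒜 0 := by
      have := SetLike.mul_mem_graded hx (hzpow_mem (-k))
      convert this using 2
      ring
    have hx' : x = (x * ((Y ^ (-k) : Bˣ) : B)) * ((Y ^ k : Bˣ) : B) := by
      have : ((Y ^ (-k) : Bˣ) : B) * ((Y ^ k : Bˣ) : B) = 1 := by
        rw [← Units.val_mul, ← zpow_add, neg_add_cancel, zpow_zero, Units.val_one]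
      rw [mul_assoc, this, mul_one]
    rw [hx']
    exact mul_mem (Subring.subset_closure (Or.inl hz)) (hzpow_C k)
  rw [eq_top_iff]
  intro b _
  classical
  rw [← DirectSum.sum_support_decompose 𝒜 b]
  exact sum_mem fun i _ => hhom i _ (SetLike.coe_mem _)
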